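/- Let n ≥ 1, let l₀ ≥ 0, and for each l ≥ l₀ let λ_l be a homogeneous polynomial of degree l in n complex variables with λ_{l₀} ≠ 0. Fix N ≥ l₀ and a linear map R : 𝒫 → 𝒫 preserving homogeneity (mapping homogeneous polynomials of degree l to homogeneous polynomials of degree l + l₀) such that λ_{l₀}(D)(R p) = p for all p ∈ 𝒫. Let S be the space of tuples (p₀,…,p_N), where each p_j is a homogeneous polynomial of degree j (or zero), satisfying the triangular system Σ_{j = i+l₀}^{N} λ_{j−i}(D) p_j = 0 for every i = 0,…,N−l₀. Then the map (p₀,…,p_N) ↦ (φ₀,…,φ_N), where φ_j = p_j + R(Σ_{i > j} λ_{i−j+l₀}(D) p_i), is a linear isomorphism from S onto the space of tuples (φ₀,…,φ_N) in which each φ_j is a λ_{l₀}-harmonic homogeneous polynomial of degree j. In particular, dim S equals the dimension of the space of λ_{l₀}-harmonic polynomials of degree at most N. -/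

import Mathlib

open MvPolynomial

/-- The iterated partial derivative `∂^α = ∏ⱼ ∂ⱼ^{α j}` acting on polynomials in `n`
variables over `ℂ`. -/
noncomputable def pderivPow {n : ℕ} (α : Fin n →₀ ℕ) :
    Module.End ℂ (MvPolynomial (Fin n) ℂ) :=
  ((List.finRange n).map fun j =>
    ((MvPolynomial.pderiv j).toLinearMap : Module.End ℂ (MvPolynomial (Fin n) ℂ)) ^ (α j)).prod

/-- For a polynomial `Q = ∑_α c_α x^α`, the constant-coefficient differential operator
`Q(D) = ∑_α c_α D^α`, where `D_j = -i ∂/∂x_j`. -/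
noncomputable def QD {n : ℕ} (Q : MvPolynomial (Fin n) ℂ) :
    Module.End ℂ (MvPolynomial (Fin n) ℂ) :=
  ∑ α ∈ Q.support, (Q.coeff α * (-Complex.I) ^ (α.sum fun _ k => k)) • pderivPow α

/-- The linear map `(p₀,…,p_N) ↦ ∑_{j = i+l₀}^{N} λ_{j-i}(D) p_j` appearing in the
triangular system. -/
noncomputable def triangularMap {n : ℕ} (N l₀ : ℕ) (lam : ℕ → MvPolynomial (Fin n) ℂ)
    (i : ℕ) : (Fin (N + 1) → MvPolynomial (Fin n) ℂ) →ₗ[ℂ] MvPolynomial (Fin n) ℂ :=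
  ∑ j ∈ Finset.univ.filter (fun j : Fin (N + 1) => i + l₀ ≤ (j : ℕ)),
    (QD (lam ((j : ℕ) - i))) ∘ₗ LinearMap.proj j

/-- The space `S` of tuples `(p₀,…,p_N)` of homogeneous polynomials (`deg pⱼ = j` or `pⱼ = 0`)
satisfying the triangular system `∑_{j = i+l₀}^{N} λ_{j-i}(D) p_j = 0` for `i = 0,…,N-l₀`. -/
noncomputable def solSpace {n : ℕ} (N l₀ : ℕ) (lam : ℕ → MvPolynomial (Fin n) ℂ) :
    Submodule ℂ (Fin (N + 1) → MvPolynomial (Fin n) ℂ) :=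
  (Submodule.pi Set.univ fun j : Fin (N + 1) => homogeneousSubmodule (Fin n) ℂ (j : ℕ)) ⊓
    ⨅ i ∈ Finset.range (N - l₀ + 1), LinearMap.ker (triangularMap N l₀ lam i)

/-- The space of tuples `(φ₀,…,φ_N)` where each `φⱼ` is a `Q`-harmonic homogeneous
polynomial of degree `j` (or zero). -/
noncomputable def harmTupleSpace {n : ℕ} (N : ℕ) (Q : MvPolynomial (Fin n) ℂ) :
    Submodule ℂ (Fin (N + 1) → MvPolynomial (Fin n) ℂ) :=
  Submodule.pi Set.univ fun j : Fin (N + 1) =>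
    homogeneousSubmodule (Fin n) ℂ (j : ℕ) ⊓ LinearMap.ker (QD Q)

/- ### Auxiliary lemmas -/

lemma finsupp_degree_sub_single {n : ℕ} (α : Fin n →₀ ℕ) (j : Fin n) (h : α j ≠ 0) :
    (α - Finsupp.single j 1).degree = α.degree - 1 := by
  have hle : Finsupp.single j 1 ≤ α := by
    rw [Finsupp.single_le_iff]; omega
  have h1 : (α - Finsupp.single j 1) + Finsupp.single j 1 = α := tsub_add_cancel_of_le hle
  have h2 : ((α - Finsupp.single j 1) + Finsupp.single j 1).degree
      = (α - Finsupp.single j 1).degree + (Finsupp.single j 1).degree := by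
    simp [Finsupp.degree_eq_weight_one, map_add]
  have h3 : (Finsupp.single j 1).degree = 1 := by
    exact Finsupp.degree_single j 1
  rw [h1] at h2
  omega

lemma isHomogeneous_pderiv_aux {n m : ℕ} {p : MvPolynomial (Fin n) ℂ} (h : p.IsHomogeneous m)
    (j : Fin n) :
    ((pderiv j) p).IsHomogeneous (m - 1) ∧ (m = 0 → (pderiv j) p = 0) := by
  constructor
  · conv_lhs => rw [← p.support_sum_monomial_coeff, map_sum]
    apply IsHomogeneous.sum
    intro α hα
    rw [pderiv_monomial]
    by_cases hz : α j = 0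
    · rw [hz]; simp only [Nat.cast_zero, mul_zero, map_zero]; exact isHomogeneous_zero _ _ _
    · apply isHomogeneous_monomial
      have hdeg : α.degree = m := by
        by_contra hne
        exact (mem_support_iff.mp hα) (h.coeff_eq_zero hne)
      rw [finsupp_degree_sub_single α j hz, hdeg]
  · intro hm
    subst hm
    conv_lhs => rw [← p.support_sum_monomial_coeff, map_sum]
    apply Finset.sum_eq_zero
    intro α hα
    rw [pderiv_monomial]
    have hdeg : α.degree = 0 := by
      by_contra hne
      exact (mem_support_iff.mp hα) (h.coeff_eq_zero hne)
    have : α = 0 := (Finsupp.degree_eq_zero_iff α).mp hdeg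
    subst this
    simp

lemma pderiv_pow_hom {n : ℕ} (j : Fin n) (k : ℕ) :
    ∀ (m : ℕ) (q : MvPolynomial (Fin n) ℂ), q.IsHomogeneous m →
    (((((pderiv j).toLinearMap : Module.End ℂ (MvPolynomial (Fin n) ℂ)) ^ k) q).IsHomogeneous
      (m - k) ∧
    (m < k → (((pderiv j).toLinearMap : Module.End ℂ (MvPolynomial (Fin n) ℂ)) ^ k) q = 0)) := by
  induction k with
  | zero => intro m q h; exact ⟨by simpa using h, by omega⟩
  | succ k ih =>
    intro m q h
    have hstep := isHomogeneous_pderiv_aux h j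
    have hq' := ih (m - 1) (pderiv j q) hstep.1
    rw [pow_succ]
    constructor
    · rw [Module.End.mul_apply]
      have : m - 1 - k = m - (k + 1) := by omega
      rw [← this]
      exact hq'.1
    · intro hmk
      rw [Module.End.mul_apply]
      by_cases hm : m = 0
      · have h0 : ((pderiv j).toLinearMap : Module.End ℂ (MvPolynomial (Fin n) ℂ)) q = 0 :=
          hstep.2 hm
        rw [h0]
        simp
      · have : m - 1 < k := by omega
        exact hq'.2 this

lemma listprod_pderiv_hom {n : ℕ} (α : Fin n →₀ ℕ) (L : List (Fin n)) :
    ∀ (m : ℕ) (q : MvPolynomial (Fin n) ℂ), q.IsHomogeneous m →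
    (((L.map fun j =>
        ((pderiv j).toLinearMap : Module.End ℂ (MvPolynomial (Fin n) ℂ)) ^ (α j)).prod
        q).IsHomogeneous (m - (L.map α).sum) ∧
    (m < (L.map α).sum →
      (L.map fun j =>
        ((pderiv j).toLinearMap : Module.End ℂ (MvPolynomial (Fin n) ℂ)) ^ (α j)).prod q = 0)) := by
  induction L with
  | nil => intro m q h; exact ⟨by simpa using h, by simp⟩
  | cons j L ih =>
    intro m q h
    simp only [List.map_cons, List.prod_cons, List.sum_cons, Module.End.mul_apply]
    have hrest := ih m q h
    have hpow := pderiv_pow_hom j (α j) (m - (L.map α).sum) _ hrest.1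
    constructor
    · have heq : m - (L.map α).sum - α j = m - (α j + (L.map α).sum) := by omega
      rw [← heq]; exact hpow.1
    · intro hlt
      by_cases hm : m < (L.map α).sum
      · rw [hrest.2 hm]; simp
      · exact hpow.2 (by omega)

lemma pderivPow_hom {n : ℕ} (α : Fin n →₀ ℕ) {m : ℕ} {q : MvPolynomial (Fin n) ℂ}
    (h : q.IsHomogeneous m) :
    ((pderivPow α q).IsHomogeneous (m - α.degree) ∧ (m < α.degree → pderivPow α q = 0)) := by
  have hsum : ((List.finRange n).map α).sum = α.degree := by
    rw [← Fin.sum_univ_def, Finsupp.degree]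
    exact (Finset.sum_subset (Finset.subset_univ _) (by
      intro x _ hx
      simpa using Finsupp.notMem_support_iff.mp hx)).symm
  have := listprod_pderiv_hom α (List.finRange n) m q h
  rw [hsum] at this
  exact this

lemma QD_hom {n : ℕ} {Q : MvPolynomial (Fin n) ℂ} {d : ℕ} (hQ : Q.IsHomogeneous d)
    {m : ℕ} {q : MvPolynomial (Fin n) ℂ} (h : q.IsHomogeneous m) :
    ((QD Q) q).IsHomogeneous (m - d) ∧ (m < d → (QD Q) q = 0) := by
  have key : ∀ α ∈ Q.support, α.degree = d := by
    intro α hα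
    by_contra hne
    exact (mem_support_iff.mp hα) (hQ.coeff_eq_zero hne)
  rw [QD, LinearMap.sum_apply]
  constructor
  · rw [← mem_homogeneousSubmodule]
    apply Submodule.sum_mem
    intro α hα
    rw [LinearMap.smul_apply]
    apply Submodule.smul_mem
    rw [mem_homogeneousSubmodule, ← key α hα]
    exact (pderivPow_hom α h).1
  · intro hmd
    apply Finset.sum_eq_zero
    intro α hα
    rw [LinearMap.smul_apply, (pderivPow_hom α h).2 (by rw [key α hα]; exact hmd), smul_zero]

/-- The map `(p₀,…,p_N) ↦ (φ₀,…,φ_N)`, `φⱼ = pⱼ + R(∑_{i>j} λ_{i-j+l₀}(D) pᵢ)`, is a linear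
isomorphism from the solution space `S` of the triangular system onto the space of tuples of
`λ_{l₀}`-harmonic homogeneous polynomials; in particular `dim S` equals the dimension of the
space of `λ_{l₀}`-harmonic polynomials of degree at most `N`. -/
theorem triangular_system_iso_harmonic_tuples {n : ℕ} (hn : 1 ≤ n) (l₀ : ℕ)
    (lam : ℕ → MvPolynomial (Fin n) ℂ)
    (hhom : ∀ l : ℕ, l₀ ≤ l → (lam l).IsHomogeneous l) (hne : lam l₀ ≠ 0)
    (N : ℕ) (hN : l₀ ≤ N)
    (R : MvPolynomial (Fin n) ℂ →ₗ[ℂ] MvPolynomial (Fin n) ℂ)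
    (hR1 : ∀ (l : ℕ) (p : MvPolynomial (Fin n) ℂ), p.IsHomogeneous l →
      (R p).IsHomogeneous (l + l₀))
    (hR2 : ∀ p : MvPolynomial (Fin n) ℂ, QD (lam l₀) (R p) = p) :
    (∃ e : solSpace N l₀ lam ≃ₗ[ℂ] harmTupleSpace N (lam l₀),
      ∀ p : solSpace N l₀ lam,
        (e p : Fin (N + 1) → MvPolynomial (Fin n) ℂ) = fun j =>
          (p : Fin (N + 1) → MvPolynomial (Fin n) ℂ) j +
            R (∑ i ∈ Finset.univ.filter (fun i : Fin (N + 1) => (j : ℕ) < (i : ℕ)),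
              QD (lam ((i : ℕ) - (j : ℕ) + l₀))
                ((p : Fin (N + 1) → MvPolynomial (Fin n) ℂ) i))) ∧
    Module.finrank ℂ (solSpace N l₀ lam) =
      Module.finrank ℂ
        ↥(restrictTotalDegree (Fin n) ℂ N ⊓ LinearMap.ker (QD (lam l₀))) := by
  classical
  set T : Module.End ℂ (Fin (N + 1) → MvPolynomial (Fin n) ℂ) :=
    LinearMap.pi (fun j : Fin (N + 1) =>
      R ∘ₗ (∑ i ∈ Finset.univ.filter (fun i : Fin (N + 1) => (j : ℕ) < (i : ℕ)),
        QD (lam ((i : ℕ) - (j : ℕ) + l₀)) ∘ₗ LinearMap.proj i)) with hTdef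
  have hT : ∀ (p : Fin (N + 1) → MvPolynomial (Fin n) ℂ) (j : Fin (N + 1)), T p j =
      R (∑ i ∈ Finset.univ.filter (fun i : Fin (N + 1) => (j : ℕ) < (i : ℕ)),
        QD (lam ((i : ℕ) - (j : ℕ) + l₀)) (p i)) := by
    intro p j
    simp [hTdef, LinearMap.pi_apply, LinearMap.sum_apply]
  -- Nilpotency of T
  have hTnil : ∀ (k : ℕ) (p : Fin (N + 1) → MvPolynomial (Fin n) ℂ) (j : Fin (N + 1)),
      N ≤ (j : ℕ) + k → (T ^ (k + 1)) p j = 0 := by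
    intro k
    induction k with
    | zero =>
      intro p j hj
      rw [pow_one, hT]
      have hempty : Finset.univ.filter (fun i : Fin (N + 1) => (j : ℕ) < (i : ℕ)) = ∅ := by
        ext i
        simp only [Finset.mem_filter, Finset.mem_univ, true_and, Finset.notMem_empty,
          iff_false, not_lt]
        omega
      rw [hempty, Finset.sum_empty, map_zero]
    | succ k ih =>
      intro p j hj
      rw [pow_succ', Module.End.mul_apply, hT]
      have hz : ∀ i ∈ Finset.univ.filter (fun i : Fin (N + 1) => (j : ℕ) < (i : ℕ)),
          QD (lam ((i : ℕ) - (j : ℕ) + l₀)) ((T ^ (k + 1)) p i) = 0 := by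
        intro i hi
        rw [ih p i (by have := (Finset.mem_filter.mp hi).2; omega), map_zero]
      rw [Finset.sum_eq_zero hz, map_zero]
  have hTpow : T ^ (N + 1) = 0 := by
    apply LinearMap.ext
    intro p
    funext j
    simp only [LinearMap.zero_apply, Pi.zero_apply]
    exact hTnil N p j (by omega)
  have hnil : IsNilpotent T := ⟨N + 1, hTpow⟩
  have hunit : IsUnit (1 + T) := hnil.isUnit_one_add
  have hgeom : (1 + T) * (∑ k ∈ Finset.range (N + 1), (-T) ^ k) = 1 := by
    have h := mul_geom_sum (-T) (N + 1)
    have hzero : (-T) ^ (N + 1) = 0 := by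
      rw [neg_pow T (N + 1), hTpow, mul_zero]
    rw [hzero, zero_sub] at h
    have key : (-T - 1 : Module.End ℂ (Fin (N + 1) → MvPolynomial (Fin n) ℂ)) = -(1 + T) := by
      abel
    rw [key, neg_mul (1 + T) (∑ i ∈ Finset.range (N + 1), (-T) ^ i)] at h
    exact neg_inj.mp h
  have hbij := (Module.End.isUnit_iff (1 + T)).mp hunit
  set e0 : (Fin (N + 1) → MvPolynomial (Fin n) ℂ) ≃ₗ[ℂ] (Fin (N + 1) → MvPolynomial (Fin n) ℂ) :=
    LinearEquiv.ofBijective (1 + T) hbij with he0def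
  have he0 : ∀ p, e0 p = (1 + T) p := fun p => rfl
  have hsymm : ∀ φ, e0.symm φ = (∑ k ∈ Finset.range (N + 1), (-T) ^ k) φ := by
    intro φ
    apply e0.injective
    rw [LinearEquiv.apply_symm_apply, he0, ← Module.End.mul_apply, hgeom, Module.End.one_apply]
  -- homogeneity of tail sums
  have hS : ∀ (p : Fin (N + 1) → MvPolynomial (Fin n) ℂ),
      (∀ i : Fin (N + 1), (p i).IsHomogeneous (i : ℕ)) → ∀ j : Fin (N + 1),
      ((∑ i ∈ Finset.univ.filter (fun i : Fin (N + 1) => (j : ℕ) < (i : ℕ)),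
        QD (lam ((i : ℕ) - (j : ℕ) + l₀)) (p i)).IsHomogeneous ((j : ℕ) - l₀)) ∧
      ((j : ℕ) < l₀ → (∑ i ∈ Finset.univ.filter (fun i : Fin (N + 1) => (j : ℕ) < (i : ℕ)),
        QD (lam ((i : ℕ) - (j : ℕ) + l₀)) (p i)) = 0) := by
    intro p hp j
    constructor
    · rw [← mem_homogeneousSubmodule]
      apply Submodule.sum_mem
      intro i hi
      have hij : (j : ℕ) < (i : ℕ) := (Finset.mem_filter.mp hi).2
      have h1 := (QD_hom (hhom ((i : ℕ) - (j : ℕ) + l₀) (by omega)) (hp i)).1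
      rw [show (i : ℕ) - ((i : ℕ) - (j : ℕ) + l₀) = (j : ℕ) - l₀ from by omega] at h1
      exact h1
    · intro hj
      apply Finset.sum_eq_zero
      intro i hi
      have hij : (j : ℕ) < (i : ℕ) := (Finset.mem_filter.mp hi).2
      exact (QD_hom (hhom _ (by omega)) (hp i)).2 (by omega)
  have hThom : ∀ (p : Fin (N + 1) → MvPolynomial (Fin n) ℂ),
      (∀ i : Fin (N + 1), (p i).IsHomogeneous (i : ℕ)) →
      ∀ j : Fin (N + 1), (T p j).IsHomogeneous (j : ℕ) := by
    intro p hp j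
    rw [hT]
    by_cases hj : l₀ ≤ (j : ℕ)
    · have h1 := hR1 _ _ (hS p hp j).1
      rw [show (j : ℕ) - l₀ + l₀ = (j : ℕ) from by omega] at h1
      exact h1
    · rw [(hS p hp j).2 (by omega), map_zero]
      exact isHomogeneous_zero _ _ _
  -- the split of the triangular map
  have hsplit : ∀ (q : Fin (N + 1) → MvPolynomial (Fin n) ℂ) (j : Fin (N + 1)), l₀ ≤ (j : ℕ) →
      triangularMap N l₀ lam ((j : ℕ) - l₀) q =
        QD (lam l₀) (q j) +
        ∑ i ∈ Finset.univ.filter (fun i : Fin (N + 1) => (j : ℕ) < (i : ℕ)),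
          QD (lam ((i : ℕ) - (j : ℕ) + l₀)) (q i) := by
    intro q j hj
    rw [triangularMap, LinearMap.sum_apply]
    simp only [LinearMap.comp_apply, LinearMap.proj_apply]
    have hset : Finset.univ.filter (fun i : Fin (N + 1) => (j : ℕ) - l₀ + l₀ ≤ (i : ℕ)) =
        insert j (Finset.univ.filter (fun i : Fin (N + 1) => (j : ℕ) < (i : ℕ))) := by
      ext i
      simp only [Finset.mem_filter, Finset.mem_univ, true_and, Finset.mem_insert]
      rw [Fin.ext_iff]
      omega
    rw [hset, Finset.sum_insert (by simp)]
    congr 1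
    · rw [show (j : ℕ) - ((j : ℕ) - l₀) = l₀ from by omega]
    · apply Finset.sum_congr rfl
      intro i hi
      have hij : (j : ℕ) < (i : ℕ) := (Finset.mem_filter.mp hi).2
      rw [show (i : ℕ) - ((j : ℕ) - l₀) = (i : ℕ) - (j : ℕ) + l₀ from by omega]
  -- membership characterizations
  have hsolmem : ∀ p : Fin (N + 1) → MvPolynomial (Fin n) ℂ, p ∈ solSpace N l₀ lam ↔
      ((∀ j : Fin (N + 1), (p j).IsHomogeneous (j : ℕ)) ∧
       ∀ i < N - l₀ + 1, triangularMap N l₀ lam i p = 0) := by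
    intro p
    rw [solSpace, Submodule.mem_inf]
    apply and_congr
    · rw [Submodule.mem_pi]
      constructor
      · intro h j; exact h j (Set.mem_univ j)
      · intro h j _; exact h j
    · simp only [Submodule.mem_iInf, LinearMap.mem_ker, Finset.mem_range]
  have hharmmem : ∀ φ : Fin (N + 1) → MvPolynomial (Fin n) ℂ,
      φ ∈ harmTupleSpace N (lam l₀) ↔
        ∀ j : Fin (N + 1), (φ j).IsHomogeneous (j : ℕ) ∧ QD (lam l₀) (φ j) = 0 := by
    intro φ
    rw [harmTupleSpace, Submodule.mem_pi]
    constructor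
    · intro h j
      have := h j (Set.mem_univ j)
      rw [Submodule.mem_inf, LinearMap.mem_ker] at this
      exact this
    · intro h j _
      rw [Submodule.mem_inf, LinearMap.mem_ker]
      exact h j
  -- forward map
  have hforward : ∀ p ∈ solSpace N l₀ lam, (1 + T) p ∈ harmTupleSpace N (lam l₀) := by
    intro p hp
    obtain ⟨hp1, hp2⟩ := (hsolmem p).mp hp
    rw [hharmmem]
    intro j
    rw [LinearMap.add_apply, Module.End.one_apply, Pi.add_apply]
    constructor
    · exact (homogeneousSubmodule (Fin n) ℂ (j : ℕ)).add_mem (hp1 j) (hThom p hp1 j)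
    · rw [map_add, hT, hR2]
      by_cases hj : l₀ ≤ (j : ℕ)
      · have h0 := hp2 ((j : ℕ) - l₀) (by have := j.isLt; omega)
        rw [hsplit p j hj] at h0
        exact h0
      · rw [(QD_hom (hhom l₀ le_rfl) (hp1 j)).2 (by omega), (hS p hp1 j).2 (by omega), add_zero]
  -- homogeneity is preserved by powers of -T
  have hnegThom : ∀ (p : Fin (N + 1) → MvPolynomial (Fin n) ℂ),
      (∀ i : Fin (N + 1), (p i).IsHomogeneous (i : ℕ)) →
      ∀ j : Fin (N + 1), ((-T) p j).IsHomogeneous (j : ℕ) := by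
    intro p hp j
    rw [LinearMap.neg_apply, Pi.neg_apply, ← mem_homogeneousSubmodule]
    exact Submodule.neg_mem _ (hThom p hp j)
  have hpowhom : ∀ (k : ℕ) (p : Fin (N + 1) → MvPolynomial (Fin n) ℂ),
      (∀ i : Fin (N + 1), (p i).IsHomogeneous (i : ℕ)) →
      ∀ j : Fin (N + 1), (((-T) ^ k) p j).IsHomogeneous (j : ℕ) := by
    intro k
    induction k with
    | zero =>
      intro p hp j
      rw [pow_zero, Module.End.one_apply]
      exact hp j
    | succ k ih =>
      intro p hp j
      rw [pow_succ, Module.End.mul_apply]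
      exact ih ((-T) p) (hnegThom p hp) j
  -- backward map
  have hbackward : ∀ φ ∈ harmTupleSpace N (lam l₀), e0.symm φ ∈ solSpace N l₀ lam := by
    intro φ hφ
    have hφ' := (hharmmem φ).mp hφ
    have hfq : (1 + T) (e0.symm φ) = φ := by
      rw [← he0]
      exact e0.apply_symm_apply φ
    have hqhom : ∀ i : Fin (N + 1), ((e0.symm φ) i).IsHomogeneous (i : ℕ) := by
      intro i
      rw [hsymm, LinearMap.sum_apply, Finset.sum_apply, ← mem_homogeneousSubmodule]
      apply Submodule.sum_mem
      intro k _
      rw [mem_homogeneousSubmodule]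
      exact hpowhom k φ (fun i => (hφ' i).1) i
    rw [hsolmem]
    refine ⟨hqhom, ?_⟩
    intro i hi
    have hjlt : i + l₀ < N + 1 := by omega
    set j : Fin (N + 1) := ⟨i + l₀, hjlt⟩ with hjdef
    have hjl : l₀ ≤ (j : ℕ) := by simp [hjdef]
    have hji : (j : ℕ) - l₀ = i := by simp [hjdef]
    have h1 := hsplit (e0.symm φ) j hjl
    rw [hji] at h1
    rw [h1]
    have h2 : φ j = (e0.symm φ) j +
        R (∑ i' ∈ Finset.univ.filter (fun i' : Fin (N + 1) => (j : ℕ) < (i' : ℕ)),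
          QD (lam ((i' : ℕ) - (j : ℕ) + l₀)) ((e0.symm φ) i')) := by
      conv_lhs => rw [← hfq]
      rw [LinearMap.add_apply, Module.End.one_apply, Pi.add_apply, hT]
    have h3 := (hφ' j).2
    rw [h2, map_add, hR2] at h3
    exact h3
  -- the submodule equality
  have hmapeq : (solSpace N l₀ lam).map
      (e0 : (Fin (N + 1) → MvPolynomial (Fin n) ℂ) →ₗ[ℂ] (Fin (N + 1) → MvPolynomial (Fin n) ℂ))
      = harmTupleSpace N (lam l₀) := by
    apply le_antisymm
    · intro φ hφ
      rw [Submodule.mem_map] at hφ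
      obtain ⟨p, hp, rfl⟩ := hφ
      exact hforward p hp
    · intro φ hφ
      rw [Submodule.mem_map]
      exact ⟨e0.symm φ, hbackward φ hφ, e0.apply_symm_apply φ⟩
  set e : solSpace N l₀ lam ≃ₗ[ℂ] harmTupleSpace N (lam l₀) :=
    (e0.submoduleMap (solSpace N l₀ lam)).trans (LinearEquiv.ofEq _ _ hmapeq) with hedef
  have heapp : ∀ p : solSpace N l₀ lam,
      (e p : Fin (N + 1) → MvPolynomial (Fin n) ℂ) = e0 (p : Fin (N + 1) → MvPolynomial (Fin n) ℂ) := by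
    intro p
    rfl
  constructor
  · refine ⟨e, ?_⟩
    intro p
    rw [heapp, he0]
    funext j
    rw [LinearMap.add_apply, Module.End.one_apply, Pi.add_apply, hT]
  · -- second part: finrank
    set tgt : Submodule ℂ (MvPolynomial (Fin n) ℂ) :=
      restrictTotalDegree (Fin n) ℂ N ⊓ LinearMap.ker (QD (lam l₀)) with htgtdef
    have htarget : ∀ q : MvPolynomial (Fin n) ℂ, q ∈ tgt ↔
        q.totalDegree ≤ N ∧ QD (lam l₀) q = 0 := by
      intro q
      rw [htgtdef, Submodule.mem_inf, LinearMap.mem_ker, mem_restrictTotalDegree]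
    have hqsum : ∀ q : MvPolynomial (Fin n) ℂ, q.totalDegree ≤ N →
        ∑ k ∈ Finset.range (N + 1), homogeneousComponent k q = q := by
      intro q hq
      have h2 : ∑ k ∈ Finset.range (q.totalDegree + 1), homogeneousComponent k q
          = ∑ k ∈ Finset.range (N + 1), homogeneousComponent k q := by
        apply Finset.sum_subset (Finset.range_subset_range.mpr (by omega))
        intro x hx hnx
        rw [Finset.mem_range] at hx
        rw [Finset.mem_range] at hnx
        exact homogeneousComponent_eq_zero _ q (by omega)
      rw [← h2, sum_homogeneousComponent]
    have hQDhc : ∀ q : MvPolynomial (Fin n) ℂ, q.totalDegree ≤ N → QD (lam l₀) q = 0 →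
        ∀ j : Fin (N + 1), QD (lam l₀) (homogeneousComponent (j : ℕ) q) = 0 := by
      intro q hdeg hker j
      by_cases hj : (j : ℕ) < l₀
      · exact (QD_hom (hhom l₀ le_rfl) ((homogeneousComponent_isHomogeneous _ _))).2 hj
      · have hsum0 : ∑ k ∈ Finset.range (N + 1), QD (lam l₀) (homogeneousComponent k q) = 0 := by
          rw [← map_sum, hqsum q hdeg, hker]
        have happ := congrArg (homogeneousComponent ((j : ℕ) - l₀)) hsum0
        rw [map_sum, map_zero, Finset.sum_eq_single (j : ℕ)] at happ
        · rwa [homogeneousComponent_of_mem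
            ((QD_hom (hhom l₀ le_rfl) (homogeneousComponent_isHomogeneous _ _)).1), if_pos rfl] at happ
        · intro k _ hkj
          by_cases hkl : k < l₀
          · rw [(QD_hom (hhom l₀ le_rfl) (homogeneousComponent_isHomogeneous _ _)).2 hkl, map_zero]
          · rw [homogeneousComponent_of_mem
              ((QD_hom (hhom l₀ le_rfl) (homogeneousComponent_isHomogeneous _ _)).1),
              if_neg (by omega)]
        · intro hjin
          exact absurd (Finset.mem_range.mpr (by have := j.isLt; omega)) hjin
    set Fraw : (Fin (N + 1) → MvPolynomial (Fin n) ℂ) →ₗ[ℂ] MvPolynomial (Fin n) ℂ :=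
      ∑ j : Fin (N + 1), LinearMap.proj j with hFrawdef
    have hFraw : ∀ p : Fin (N + 1) → MvPolynomial (Fin n) ℂ, Fraw p = ∑ j : Fin (N + 1), p j := by
      intro p
      simp [hFrawdef, LinearMap.sum_apply]
    set Graw : MvPolynomial (Fin n) ℂ →ₗ[ℂ] (Fin (N + 1) → MvPolynomial (Fin n) ℂ) :=
      LinearMap.pi (fun j : Fin (N + 1) => homogeneousComponent (j : ℕ)) with hGrawdef
    have hGraw : ∀ (q : MvPolynomial (Fin n) ℂ) (j : Fin (N + 1)),
        Graw q j = homogeneousComponent (j : ℕ) q := fun q j => rfl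
    have hFmem : ∀ x : harmTupleSpace N (lam l₀),
        Fraw (x : Fin (N + 1) → MvPolynomial (Fin n) ℂ) ∈ tgt := by
      intro x
      have hx := (hharmmem _).mp x.2
      rw [hFraw, htgtdef, Submodule.mem_inf]
      constructor
      · apply Submodule.sum_mem
        intro j _
        rw [mem_restrictTotalDegree]
        exact le_trans (hx j).1.totalDegree_le (by have := j.isLt; omega)
      · rw [LinearMap.mem_ker, map_sum]
        exact Finset.sum_eq_zero (fun j _ => (hx j).2)
    have hGmem : ∀ x : tgt, Graw (x : MvPolynomial (Fin n) ℂ) ∈ harmTupleSpace N (lam l₀) := by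
      intro x
      have hx := (htarget _).mp x.2
      rw [hharmmem]
      intro j
      rw [hGraw]
      exact ⟨homogeneousComponent_isHomogeneous _ _, hQDhc _ hx.1 hx.2 j⟩
    set F : harmTupleSpace N (lam l₀) →ₗ[ℂ] tgt :=
      LinearMap.codRestrict tgt (Fraw ∘ₗ (harmTupleSpace N (lam l₀)).subtype)
        (fun x => hFmem x) with hFdef
    set G : tgt →ₗ[ℂ] harmTupleSpace N (lam l₀) :=
      LinearMap.codRestrict (harmTupleSpace N (lam l₀)) (Graw ∘ₗ tgt.subtype)
        (fun x => hGmem x) with hGdef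
    have hFGx : ∀ x : tgt, F (G x) = x := by
      intro x
      apply Subtype.ext
      have hx := (htarget _).mp x.2
      show Fraw (Graw (x : MvPolynomial (Fin n) ℂ)) = (x : MvPolynomial (Fin n) ℂ)
      rw [hFraw]
      have : ∀ j : Fin (N + 1), Graw (x : MvPolynomial (Fin n) ℂ) j
          = homogeneousComponent (j : ℕ) (x : MvPolynomial (Fin n) ℂ) := fun j => rfl
      simp only [this]
      rw [Fin.sum_univ_eq_sum_range (fun k => homogeneousComponent k (x : MvPolynomial (Fin n) ℂ))
        (N + 1)]
      exact hqsum _ hx.1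
    have hGFx : ∀ x : harmTupleSpace N (lam l₀), G (F x) = x := by
      intro x
      apply Subtype.ext
      have hx := (hharmmem _).mp x.2
      show Graw (Fraw (x : Fin (N + 1) → MvPolynomial (Fin n) ℂ))
        = (x : Fin (N + 1) → MvPolynomial (Fin n) ℂ)
      funext j
      rw [hGraw, hFraw, map_sum, Finset.sum_eq_single j]
      · rw [homogeneousComponent_of_mem (hx j).1, if_pos rfl]
      · intro k _ hkj
        rw [homogeneousComponent_of_mem (hx k).1, if_neg (fun h => hkj (Fin.ext h).symm)]
      · intro hjin
        exact absurd (Finset.mem_univ j) hjin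
    set e2 : harmTupleSpace N (lam l₀) ≃ₗ[ℂ] tgt :=
      LinearEquiv.ofLinear F G (LinearMap.ext fun x => hFGx x) (LinearMap.ext fun x => hGFx x)
      with he2def
    exact (e.trans e2).finrank_eq
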